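/- Almost convexity of Minkowski sums: let A_1, …, A_n ⊆ ℝ^d be non-empty compact sets with A_i ⊆ B(c_i, R) for points c_i and some R ≥ 0. Then conv(A_1) + ⋯ + conv(A_n) ⊆ A_1 + ⋯ + A_n + B(0, R√d). -/
import Mathlib

open Pointwise Metric RealInnerProductSpace Module

variable {V : Type*} [NormedAddCommGroup V] [InnerProductSpace ℝ V]



lemma cassels_step {A : Set V} {cc : V} {R : ℝ}
    (hA : A ⊆ closedBall cc R) {x : V} (hx : x ∈ convexHull ℝ A) (v : V) :
    ∃ a ∈ A, ‖v + (a - x)‖ ^ 2 ≤ ‖v‖ ^ 2 + R ^ 2 := by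
  rw [convexHull_eq_union_convexHull_finite_subsets] at hx
  simp only [Set.mem_iUnion] at hx
  obtain ⟨t, hts, hx⟩ := hx
  obtain ⟨w, hw0, hw1, hxw⟩ := Finset.mem_convexHull'.1 hx
  have hzero : ∑ a ∈ t, w a • (a - x) = 0 := by
    simp only [smul_sub, Finset.sum_sub_distrib, ← Finset.sum_smul, hw1, one_smul, hxw, sub_self]
  have hxc : ∑ a ∈ t, w a • (a - cc) = x - cc := by
    simp only [smul_sub, Finset.sum_sub_distrib, ← Finset.sum_smul, hw1, one_smul, hxw]
  have key : ∑ a ∈ t, w a * ‖v + (a - x)‖ ^ 2 ≤ ‖v‖ ^ 2 + R ^ 2 := by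
    have hvar : ∑ a ∈ t, w a * ‖a - x‖ ^ 2 ≤ R ^ 2 := by
      have step1 : ∑ a ∈ t, w a * ‖a - x‖ ^ 2
          = (∑ a ∈ t, w a * ‖a - cc‖ ^ 2) - 2 * ⟪∑ a ∈ t, w a • (a - cc), x - cc⟫
            + (∑ a ∈ t, w a) * ‖x - cc‖ ^ 2 := by
        rw [sum_inner, Finset.mul_sum, Finset.sum_mul, ← Finset.sum_sub_distrib,
          ← Finset.sum_add_distrib]
        refine Finset.sum_congr rfl fun a _ => ?_
        have h1 : a - x = (a - cc) - (x - cc) := by abel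
        rw [h1, norm_sub_sq_real, real_inner_smul_left]
        ring
      have step2 : ∑ a ∈ t, w a * ‖a - cc‖ ^ 2 ≤ R ^ 2 := by
        calc ∑ a ∈ t, w a * ‖a - cc‖ ^ 2 ≤ ∑ a ∈ t, w a * R ^ 2 := by
              refine Finset.sum_le_sum fun a ha => ?_
              have hle : ‖a - cc‖ ≤ R := by
                have := hA (hts ha); rwa [mem_closedBall, dist_eq_norm] at this
              exact mul_le_mul_of_nonneg_left
                (pow_le_pow_left₀ (norm_nonneg _) hle 2) (hw0 a ha)
          _ = R ^ 2 := by rw [← Finset.sum_mul, hw1, one_mul]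
      rw [step1, hxc, hw1, real_inner_self_eq_norm_sq]
      nlinarith [sq_nonneg ‖x - cc‖]
    have step3 : ∑ a ∈ t, w a * ‖v + (a - x)‖ ^ 2
        = (∑ a ∈ t, w a) * ‖v‖ ^ 2 + 2 * ⟪v, ∑ a ∈ t, w a • (a - x)⟫
          + ∑ a ∈ t, w a * ‖a - x‖ ^ 2 := by
      rw [inner_sum, Finset.mul_sum, Finset.sum_mul, ← Finset.sum_add_distrib,
        ← Finset.sum_add_distrib]
      refine Finset.sum_congr rfl fun a _ => ?_
      rw [norm_add_sq_real, real_inner_smul_right]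
      ring
    rw [step3, hzero, hw1, inner_zero_right]
    linarith
  have hex : ∃ a ∈ t, ‖v + (a - x)‖ ^ 2 ≤ ‖v‖ ^ 2 + R ^ 2 := by
    by_contra hcon
    push_neg at hcon
    obtain ⟨a0, ha0t, ha0pos⟩ : ∃ a ∈ t, 0 < w a := by
      by_contra h
      push_neg at h
      have : ∑ a ∈ t, w a = 0 :=
        Finset.sum_eq_zero fun a ha => le_antisymm (h a ha) (hw0 a ha)
      rw [hw1] at this; norm_num at this
    have : ‖v‖ ^ 2 + R ^ 2 < ∑ a ∈ t, w a * ‖v + (a - x)‖ ^ 2 := by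
      calc ‖v‖ ^ 2 + R ^ 2 = ∑ a ∈ t, w a * (‖v‖ ^ 2 + R ^ 2) := by
            rw [← Finset.sum_mul, hw1, one_mul]
        _ < ∑ a ∈ t, w a * ‖v + (a - x)‖ ^ 2 :=
          Finset.sum_lt_sum
            (fun a ha => mul_le_mul_of_nonneg_left (hcon a ha).le (hw0 a ha))
            ⟨a0, ha0t, mul_lt_mul_of_pos_left (hcon a0 ha0t) ha0pos⟩
    linarith
  obtain ⟨a, hat, hab⟩ := hex
  exact ⟨a, hts hat, hab⟩

lemma cassels_greedy {n : ℕ} {A : Fin n → Set V} {c : Fin n → V} {R : ℝ}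
    (hball : ∀ i, A i ⊆ closedBall (c i) R) (hne : ∀ i, (A i).Nonempty)
    (y : Fin n → V) (hy : ∀ i, y i ∈ convexHull ℝ (A i)) (S : Finset (Fin n)) :
    ∃ a : Fin n → V, (∀ i ∈ S, a i ∈ A i) ∧
      ‖∑ i ∈ S, (a i - y i)‖ ^ 2 ≤ S.card * R ^ 2 := by
  classical
  induction S using Finset.induction_on with
  | empty => exact ⟨fun i => (hne i).some, by simp, by simp⟩
  | @insert j S hj ih =>
    obtain ⟨a, haA, hab⟩ := ih
    obtain ⟨b, hbA, hbb⟩ := cassels_step (hball j) (hy j) (∑ i ∈ S, (a i - y i))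
    refine ⟨Function.update a j b, ?_, ?_⟩
    · intro i hi
      rcases Finset.mem_insert.1 hi with rfl | hi
      · rwa [Function.update_self]
      · rw [Function.update_of_ne (ne_of_mem_of_not_mem hi hj)]
        exact haA i hi
    · rw [Finset.sum_insert hj, Function.update_self]
      have hrest : ∑ i ∈ S, (Function.update a j b i - y i) = ∑ i ∈ S, (a i - y i) :=
        Finset.sum_congr rfl fun i hi => by
          rw [Function.update_of_ne (ne_of_mem_of_not_mem hi hj)]
      rw [hrest, Finset.card_insert_of_notMem hj, add_comm (b - y j)]
      push_cast
      calc ‖∑ i ∈ S, (a i - y i) + (b - y j)‖ ^ 2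
          ≤ ‖∑ i ∈ S, (a i - y i)‖ ^ 2 + R ^ 2 := hbb
        _ ≤ S.card * R ^ 2 + R ^ 2 := by linarith
        _ = (S.card + 1) * R ^ 2 := by ring

section
variable [FiniteDimensional ℝ V]



lemma sf_aux {n : ℕ} (A : Fin n → Set V) :
    ∀ (N : ℕ) (t : Fin n → Finset V) (w : Fin n → V → ℝ),
      ∑ i, (t i).card = N →
      (∀ i, ↑(t i) ⊆ A i) →
      (∀ i, ∀ a ∈ t i, 0 ≤ w i a) →
      (∀ i, ∑ a ∈ t i, w i a = 1) →
      ∃ (y : Fin n → V) (S : Finset (Fin n)),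
        (∀ i, y i ∈ convexHull ℝ (A i)) ∧
        (∑ i, y i = ∑ i, ∑ a ∈ t i, w i a • a) ∧
        S.card ≤ finrank ℝ V ∧ ∀ i ∉ S, y i ∈ A i := by
  classical
  intro N
  induction N using Nat.strong_induction_on with
  | _ N ih =>
  intro t w hN hts hw0 hw1
  set D := finrank ℝ V with hD
  have htne : ∀ i, (t i).Nonempty := by
    intro i
    rcases Finset.eq_empty_or_nonempty (t i) with h | h
    · exfalso; have := hw1 i; rw [h] at this; simp at this
    · exact h
  by_cases hcase : N ≤ n + D
  · -- small case: done
    refine ⟨fun i => ∑ a ∈ t i, w i a • a,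
      Finset.univ.filter (fun i => 1 < (t i).card), ?_, rfl, ?_, ?_⟩
    · intro i
      exact convexHull_mono (hts i)
        (Finset.mem_convexHull'.2 ⟨w i, hw0 i, hw1 i, rfl⟩)
    · -- card bound
      have hsum : n + (Finset.univ.filter (fun i => 1 < (t i).card)).card ≤ N := by
        have h1 : ∀ i : Fin n,
            1 + (if 1 < (t i).card then 1 else 0) ≤ (t i).card := by
          intro i
          by_cases h : 1 < (t i).card
          · simp [h]; omega
          · simpa [h] using (htne i).card_pos
        calc n + (Finset.univ.filter (fun i => 1 < (t i).card)).card
            = ∑ i : Fin n, (1 + if 1 < (t i).card then 1 else 0) := by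
              rw [Finset.sum_add_distrib, Finset.card_filter]
              simp
          _ ≤ ∑ i, (t i).card := Finset.sum_le_sum fun i _ => h1 i
          _ = N := hN
      omega
    · intro i hi
      simp only [Finset.mem_filter, Finset.mem_univ, true_and, not_lt] at hi
      have hcard : (t i).card = 1 := le_antisymm hi (htne i).card_pos
      obtain ⟨a, ha⟩ := Finset.card_eq_one.1 hcard
      have hw : w i a = 1 := by have := hw1 i; rwa [ha, Finset.sum_singleton] at this
      show (∑ b ∈ t i, w i b • b) ∈ A i
      have : ∑ b ∈ t i, w i b • b = a := by rw [ha, Finset.sum_singleton, hw, one_smul]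
      rw [this]
      exact hts i (by rw [ha]; exact Finset.mem_singleton_self a)
  · -- big case: find a dependence and reduce
    push_neg at hcase
    set ι := (i : Fin n) × {a : V // a ∈ t i} with hι
    have hcard : Fintype.card ι = N := by
      rw [← hN, Fintype.card_sigma]
      exact Finset.sum_congr rfl fun i _ => Fintype.card_coe _
    set v : ι → V × (Fin n → ℝ) := fun p => ((p.2 : V), Pi.single p.1 1) with hv
    have hnli : ¬ LinearIndependent ℝ v := by
      intro hli
      have := hli.fintype_card_le_finrank
      rw [hcard, Module.finrank_prod, Module.finrank_fintype_fun_eq_card,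
        Fintype.card_fin] at this
      omega
    obtain ⟨g, hg0, p0, hp0⟩ := Fintype.not_linearIndependent_iff.1 hnli
    set μ : Fin n → V → ℝ := fun i a => if h : a ∈ t i then g ⟨i, ⟨a, h⟩⟩ else 0 with hμ
    have hμcoe : ∀ (i : Fin n) (j : {a : V // a ∈ t i}), μ i (j : V) = g ⟨i, j⟩ := by
      intro i j
      simp only [hμ, dif_pos j.2]
    -- first component of the relation
    have hμ1 : ∑ i, ∑ a ∈ t i, μ i a • a = 0 := by
      have h := congrArg Prod.fst hg0
      rw [Prod.fst_sum] at h
      simp only [hv, Prod.smul_mk, Prod.fst_zero] at h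
      rw [← Finset.univ_sigma_univ, Finset.sum_sigma] at h
      rw [← h]
      refine Finset.sum_congr rfl fun i _ => ?_
      rw [← Finset.sum_coe_sort (t i) (fun a => μ i a • a)]
      exact Finset.sum_congr rfl fun j _ => by rw [hμcoe]
    -- second component
    have hμ2 : ∀ i, ∑ a ∈ t i, μ i a = 0 := by
      intro i
      have h := congrFun (congrArg Prod.snd hg0) i
      rw [Prod.snd_sum] at h
      simp only [hv, Prod.smul_mk, Prod.snd_zero, Pi.zero_apply] at h
      rw [Finset.sum_apply] at h
      simp only [Pi.smul_apply, Pi.single_apply, smul_eq_mul, mul_ite, mul_one, mul_zero] at h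
      rw [← Finset.univ_sigma_univ, Finset.sum_sigma] at h
      have hh : ∀ i' : Fin n,
          (∑ j : {a : V // a ∈ t i'}, if i = i' then g ⟨i', j⟩ else 0)
            = if i = i' then ∑ j : {a : V // a ∈ t i'}, g ⟨i', j⟩ else 0 := by
        intro i'; split <;> simp
      simp only [hh, Finset.sum_ite_eq, Finset.mem_univ, if_true] at h
      rw [← Finset.sum_coe_sort (t i) (fun a => μ i a), ← h]
      exact Finset.sum_congr rfl fun j _ => by rw [hμcoe]
    -- there is a negative coefficient
    set P : Finset ((_ : Fin n) × V) := Finset.univ.sigma t with hP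
    set Q : Finset ((_ : Fin n) × V) := P.filter (fun q => μ q.1 q.2 < 0) with hQ
    have hQne : Q.Nonempty := by
      have hne0 : μ p0.1 (p0.2 : V) ≠ 0 := by rw [hμcoe]; exact hp0
      have : ∃ a ∈ t p0.1, μ p0.1 a < 0 := by
        by_contra hcon
        push_neg at hcon
        rcases lt_or_gt_of_ne hne0 with hlt | hgt
        · exact absurd hlt (not_lt.2 (hcon _ p0.2.2))
        · have hpos : 0 < ∑ a ∈ t p0.1, μ p0.1 a :=
            Finset.sum_pos' (hcon) ⟨(p0.2 : V), p0.2.2, hgt⟩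
          rw [hμ2] at hpos; exact lt_irrefl _ hpos
      obtain ⟨a, hat, haneg⟩ := this
      exact ⟨⟨p0.1, a⟩, Finset.mem_filter.2 ⟨Finset.mem_sigma.2 ⟨Finset.mem_univ _, hat⟩, haneg⟩⟩
    obtain ⟨q0, hq0Q, hq0min⟩ :=
      Finset.exists_min_image Q (fun q => w q.1 q.2 / (-μ q.1 q.2)) hQne
    obtain ⟨hq0P, hq0neg⟩ := Finset.mem_filter.1 hq0Q
    have hq0t : q0.2 ∈ t q0.1 := (Finset.mem_sigma.1 hq0P).2
    set i0 := q0.1 with hi0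
    set a0 := q0.2 with ha0
    set τ := w i0 a0 / (-μ i0 a0) with hτ
    have hμ0neg : μ i0 a0 < 0 := hq0neg
    have hτ0 : 0 ≤ τ := div_nonneg (hw0 _ _ hq0t) (by linarith)
    set w' : Fin n → V → ℝ := fun i a => w i a + τ * μ i a with hw'
    set t' : Fin n → Finset V := fun i => if i = i0 then (t i0).erase a0 else t i with ht'
    -- new weights are nonneg on t'
    have ht'sub : ∀ i, t' i ⊆ t i := by
      intro i
      by_cases h : i = i0
      · subst h; simp only [ht', if_pos rfl]; exact Finset.erase_subset _ _
      · simp only [ht', if_neg h]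
        exact Finset.Subset.refl _
    have hw'0 : ∀ i, ∀ a ∈ t i, 0 ≤ w' i a := by
      intro i a hat
      by_cases hμa : 0 ≤ μ i a
      · have : 0 ≤ τ * μ i a := mul_nonneg hτ0 hμa
        have := hw0 i a hat
        simp only [hw']; linarith
      · push_neg at hμa
        have hqQ : (⟨i, a⟩ : (_ : Fin n) × V) ∈ Q :=
          Finset.mem_filter.2 ⟨Finset.mem_sigma.2 ⟨Finset.mem_univ _, hat⟩, hμa⟩
        have := hq0min _ hqQ
        rw [le_div_iff₀ (by linarith : (0:ℝ) < -μ i a)] at this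
        simp only [hw']; nlinarith
    -- the weight at the critical atom vanishes
    have hw'zero : w' i0 a0 = 0 := by
      have hne : μ i0 a0 ≠ 0 := ne_of_lt hμ0neg
      simp only [hw', hτ]
      rw [div_neg, neg_mul, div_mul_eq_mul_div, mul_div_assoc, div_self hne]
      ring
    -- sums of new weights are 1
    have hw'1 : ∀ i, ∑ a ∈ t' i, w' i a = 1 := by
      intro i
      have hfull : ∑ a ∈ t i, w' i a = 1 := by
        simp only [hw']
        rw [Finset.sum_add_distrib, hw1, ← Finset.mul_sum, hμ2, mul_zero, add_zero]
      by_cases h : i = i0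
      · subst h
        simp only [ht', if_pos rfl]
        rw [Finset.sum_erase_eq_sub hq0t, hfull, hw'zero, sub_zero]
      · simp only [ht', if_neg h]; exact hfull
    -- new total vector sum is unchanged
    have hvec : ∑ i, ∑ a ∈ t' i, w' i a • a = ∑ i, ∑ a ∈ t i, w i a • a := by
      have hfull : ∑ i, ∑ a ∈ t i, w' i a • a = ∑ i, ∑ a ∈ t i, w i a • a := by
        have : ∀ i, ∑ a ∈ t i, w' i a • a
            = (∑ a ∈ t i, w i a • a) + τ • ∑ a ∈ t i, μ i a • a := by
          intro i
          rw [Finset.smul_sum, ← Finset.sum_add_distrib]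
          refine Finset.sum_congr rfl fun a _ => ?_
          simp only [hw', add_smul, smul_smul]
        simp only [this]
        rw [Finset.sum_add_distrib, ← Finset.smul_sum, hμ1, smul_zero, add_zero]
      have hsplit : ∀ i, ∑ a ∈ t' i, w' i a • a
          = ∑ a ∈ t i, w' i a • a - (if i = i0 then w' i0 a0 • a0 else 0) := by
        intro i
        by_cases h : i = i0
        · subst h
          simp only [ht', if_pos rfl]
          rw [Finset.sum_erase_eq_sub hq0t]
          simp
        · simp only [ht', if_neg h, sub_zero]
      simp only [hsplit]
      rw [Finset.sum_sub_distrib, Finset.sum_ite_eq', if_pos (Finset.mem_univ _), hw'zero,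
        zero_smul, sub_zero, hfull]
    -- apply induction hypothesis
    have hM : ∑ i, (t' i).card < N := by
      rw [← hN]
      refine Finset.sum_lt_sum (fun i _ => Finset.card_le_card (ht'sub i)) ⟨i0, Finset.mem_univ _, ?_⟩
      simp only [ht', if_pos rfl]
      exact Finset.card_erase_lt_of_mem hq0t
    obtain ⟨y, S, hyc, hysum, hScard, hSA⟩ :=
      ih _ hM t' w' rfl (fun i => (Finset.coe_subset.2 (ht'sub i)).trans (hts i))
        (fun i a ha => hw'0 i a (ht'sub i ha)) hw'1
    exact ⟨y, S, hyc, by rw [hysum, hvec], hScard, hSA⟩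

end

theorem almost_convexity {d n : ℕ} (A : Fin n → Set (EuclideanSpace ℝ (Fin d)))
    (hne : ∀ i, (A i).Nonempty) (hc : ∀ i, IsCompact (A i))
    (c : Fin n → EuclideanSpace ℝ (Fin d)) (R : ℝ) (hR : 0 ≤ R)
    (hball : ∀ i, A i ⊆ closedBall (c i) R) :
    (∑ i, convexHull ℝ (A i)) ⊆ (∑ i, A i) + closedBall 0 (R * Real.sqrt d) := by
  classical
  intro x hx
  obtain ⟨g, hgmem, hgsum⟩ := (Set.mem_fintype_sum _ x).1 hx
  have hrep : ∀ i, ∃ (t : Finset (EuclideanSpace ℝ (Fin d))) (w : EuclideanSpace ℝ (Fin d) → ℝ),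
      ↑t ⊆ A i ∧ (∀ a ∈ t, 0 ≤ w a) ∧ (∑ a ∈ t, w a = 1) ∧ ∑ a ∈ t, w a • a = g i := by
    intro i
    have h := hgmem i
    rw [convexHull_eq_union_convexHull_finite_subsets] at h
    simp only [Set.mem_iUnion] at h
    obtain ⟨t, hts, hmem⟩ := h
    obtain ⟨w, h0, h1, h2⟩ := Finset.mem_convexHull'.1 hmem
    exact ⟨t, w, hts, h0, h1, h2⟩
  choose t w h1 h2 h3 h4 using hrep
  obtain ⟨y, S, hyc, hysum, hScard, hSA⟩ := sf_aux A (∑ i, (t i).card) t w rfl h1 h2 h3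
  have hxy : ∑ i, y i = x := by
    rw [hysum, Finset.sum_congr rfl fun i _ => h4 i, hgsum]
  have hScard' : S.card ≤ d := by
    rwa [finrank_euclideanSpace_fin] at hScard
  obtain ⟨a, haA, hbound⟩ := cassels_greedy hball hne y hyc S
  set z : Fin n → EuclideanSpace ℝ (Fin d) := fun i => if i ∈ S then a i else y i with hz
  have hzA : ∀ i, z i ∈ A i := by
    intro i
    by_cases h : i ∈ S
    · simp only [hz, if_pos h]; exact haA i h
    · simp only [hz, if_neg h]; exact hSA i h
  have hzsum : (∑ i, z i) ∈ ∑ i, A i :=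
    Set.finset_sum_mem_finset_sum Finset.univ A z fun i _ => hzA i
  have hdiff : x - ∑ i, z i = -(∑ i ∈ S, (a i - y i)) := by
    rw [← hxy, ← Finset.sum_sub_distrib]
    have e1 : ∑ i : Fin n, (y i - z i) = ∑ i ∈ S, (y i - z i) :=
      (Finset.sum_subset (Finset.subset_univ S) fun i _ hiS => by
        simp only [hz, if_neg hiS, sub_self]).symm
    rw [e1, ← Finset.sum_neg_distrib]
    refine Finset.sum_congr rfl fun i hi => ?_
    simp only [hz, if_pos hi, neg_sub]
  have hnorm : ‖x - ∑ i, z i‖ ≤ R * Real.sqrt d := by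
    have hb2 : ‖∑ i ∈ S, (a i - y i)‖ ^ 2 ≤ (R * Real.sqrt d) ^ 2 := by
      have : (S.card : ℝ) * R ^ 2 ≤ (d : ℝ) * R ^ 2 :=
        mul_le_mul_of_nonneg_right (Nat.cast_le.2 hScard') (sq_nonneg R)
      have hsq : (R * Real.sqrt d) ^ 2 = (d : ℝ) * R ^ 2 := by
        rw [mul_pow, Real.sq_sqrt (Nat.cast_nonneg d)]; ring
      rw [hsq]
      exact hbound.trans this
    rw [hdiff, norm_neg]
    have h0 : 0 ≤ R * Real.sqrt d := mul_nonneg hR (Real.sqrt_nonneg _)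
    nlinarith [norm_nonneg (∑ i ∈ S, (a i - y i))]
  have hxeq : x = (∑ i, z i) + (x - ∑ i, z i) := by abel
  rw [hxeq]
  exact Set.add_mem_add hzsum (mem_closedBall_zero_iff.2 hnorm)
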